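/- For the sup-Γ trawl function d(s) := b + (1−b)·(1 − s/α)^{−H} with α > 0, H > 1 and b ∈ [0,1], the associated squashed trawl A satisfies leb(A) = (1 − b)·α/(H − 1) and, for every t ≥ 0, leb(A_t ∩ A) = ((1 − b)·α/(H − 1))·(1 + t/α)^{1−H}. -/

import Mathlib

open MeasureTheory Set Filter

/-- For the sup-Γ trawl function `d(s) = b + (1−b)·(1 − s/α)^{−H}` with
`α > 0`, `H > 1` and `b ∈ [0,1]`, the squashed trawl `A` satisfies
`leb(A) = (1 − b)·α/(H − 1)` and, for every `t ≥ 0`,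
`leb(A_t ∩ A) = ((1 − b)·α/(H − 1))·(1 + t/α)^{1−H}`. -/
theorem supGamma_trawl_areas
    (b α H : ℝ) (hb : b ∈ Set.Icc (0:ℝ) 1) (hα : 0 < α) (hH : 1 < H)
    (d : ℝ → ℝ)
    (hd : ∀ s : ℝ, d s = b + (1 - b) * (1 - s / α) ^ (-H))
    (A : ℝ → Set (ℝ × ℝ))
    (hA : ∀ t, A t = {p : ℝ × ℝ | p.2 ≤ t ∧ b ≤ p.1 ∧ p.1 < d (p.2 - t)}) :
    volume (A 0) = ENNReal.ofReal ((1 - b) * α / (H - 1)) ∧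
    ∀ t ≥ (0:ℝ),
      volume (A t ∩ A 0)
        = ENNReal.ofReal ((1 - b) * α / (H - 1) * (1 + t / α) ^ (1 - H)) := by
  obtain ⟨hb0, hb1⟩ := hb
  have hb' : (0:ℝ) ≤ 1 - b := by linarith
  have hH1 : (0:ℝ) < H - 1 := by linarith
  have hdm : Measurable d := by
    have : d = fun s => b + (1 - b) * (1 - s / α) ^ (-H) := funext hd
    rw [this]
    exact measurable_const.add
      (((measurable_const.sub (measurable_id.div_const α)).pow measurable_const).const_mul _)
  -- the key computation
  have key : ∀ t : ℝ, 0 ≤ t →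
      volume {p : ℝ × ℝ | p.2 ≤ 0 ∧ b ≤ p.1 ∧ p.1 < d (p.2 - t)}
        = ENNReal.ofReal ((1 - b) * α / (H - 1) * (1 + t / α) ^ (1 - H)) := by
    intro t ht
    set c : ℝ := 1 + t / α with hc
    have htα : (0:ℝ) ≤ t / α := div_nonneg ht hα.le
    have hc0 : 0 < c := by simp only [hc]; linarith
    have hbase : ∀ s : ℝ, s ≤ 0 → 0 < c - s / α := by
      intro s hs
      have : s / α ≤ 0 := div_nonpos_of_nonpos_of_nonneg hs hα.le
      linarith
    have hds : ∀ s : ℝ, 1 - (s - t) / α = c - s / α := by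
      intro s; rw [sub_div]; simp only [hc]; ring
    set f : ℝ → ℝ := fun s => (1 - b) * (c - s / α) ^ (-H) with hf
    set F : ℝ → ℝ := fun s => ((1 - b) * α / (H - 1)) * (c - s / α) ^ (1 - H) with hF
    -- derivative
    have hderiv : ∀ s ∈ Iic (0:ℝ), HasDerivAt F (f s) s := by
      intro s hs
      have h1 : HasDerivAt (fun s : ℝ => c - s / α) (-(1 / α)) s := by
        simpa using ((hasDerivAt_id s).div_const α).const_sub c
      have h2 := h1.rpow_const (p := 1 - H) (Or.inl (hbase s hs).ne')
      have h3 := h2.const_mul ((1 - b) * α / (H - 1))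
      have he : (1:ℝ) - H - 1 = -H := by ring
      rw [he] at h3
      refine h3.congr_deriv ?_
      simp only [hf]
      field_simp
      ring
    -- tendsto at -∞
    have htend : Tendsto F atBot (nhds 0) := by
      have h1 : Tendsto (fun s : ℝ => c - s / α) atBot atTop := by
        have h1a : Tendsto (fun s : ℝ => s / α) atBot atBot :=
          tendsto_id.atBot_div_const hα
        have h1b : Tendsto (fun s : ℝ => -(s / α)) atBot atTop :=
          tendsto_neg_atBot_atTop.comp h1a
        have := tendsto_atTop_add_const_left atBot c h1b
        simpa [sub_eq_add_neg] using this
      have h2 : Tendsto (fun x : ℝ => x ^ (1 - H)) atTop (nhds 0) := by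
        simpa [neg_sub] using tendsto_rpow_neg_atTop (by linarith : (0:ℝ) < H - 1)
      have := (h2.comp h1).const_mul ((1 - b) * α / (H - 1))
      simpa [hF, Function.comp] using this
    -- integrability
    have hint : IntegrableOn f (Iic (0:ℝ)) := by
      have hu : IntegrableOn (fun x : ℝ => f (-x)) (Ioi (0:ℝ)) := by
        apply integrableOn_Ioi_deriv_of_nonneg' (g := fun x => -F (-x))
        · intro x hx
          have hx' : -x ∈ Iic (0:ℝ) := by
            simp only [mem_Ici] at hx; simp only [mem_Iic]; linarith
          have := ((hderiv (-x) hx').comp x (hasDerivAt_neg x)).neg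
          simp at this
          exact this
        · intro x hx
          have hx' : (-x : ℝ) ≤ 0 := by simp at hx ⊢; linarith
          exact mul_nonneg hb' (Real.rpow_nonneg (hbase _ hx').le _)
        · have := htend.comp tendsto_neg_atTop_atBot
          simpa using this.neg
      have := (MeasurePreserving.integrableOn_comp_preimage
        (Measure.measurePreserving_neg (volume : Measure ℝ))
        (Homeomorph.neg ℝ).measurableEmbedding).2 hu
      have hpre : (Neg.neg ⁻¹' Ioi (0:ℝ)) = Iio 0 := by ext x; simp
      rw [hpre] at this
      have h2 : IntegrableOn f (Iio (0:ℝ)) := by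
        simpa [Function.comp_def, neg_neg] using this
      exact (integrableOn_Iic_iff_integrableOn_Iio).mpr h2
    -- the real integral
    have hF0 : ∫ s in Iic (0:ℝ), f s = (1 - b) * α / (H - 1) * c ^ (1 - H) := by
      rw [integral_Iic_of_hasDerivAt_of_tendsto' hderiv hint htend]
      simp [hF]
    -- measurability of the set
    have hSmeas : MeasurableSet {p : ℝ × ℝ | p.2 ≤ 0 ∧ b ≤ p.1 ∧ p.1 < d (p.2 - t)} := by
      refine (measurableSet_le measurable_snd measurable_const).inter
        ((measurableSet_le measurable_const measurable_fst).inter ?_)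
      exact measurableSet_lt measurable_fst (hdm.comp (measurable_snd.sub measurable_const))
    -- slicing
    have hslice : ∀ y : ℝ,
        volume ((fun x => (x, y)) ⁻¹' {p : ℝ × ℝ | p.2 ≤ 0 ∧ b ≤ p.1 ∧ p.1 < d (p.2 - t)})
          = (Iic (0:ℝ)).indicator (fun y => ENNReal.ofReal (f y)) y := by
      intro y
      by_cases hy : y ≤ 0
      · have hpre : ((fun x => (x, y)) ⁻¹' {p : ℝ × ℝ | p.2 ≤ 0 ∧ b ≤ p.1 ∧ p.1 < d (p.2 - t)})
            = Ico b (d (y - t)) := by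
          ext x; simp [Set.mem_Ico, hy, and_comm]
        rw [hpre, Real.volume_Ico, Set.indicator_of_mem (mem_Iic.mpr hy)]
        congr 1
        rw [hd, hds y]
        simp only [hf]; ring
      · have hpre : ((fun x => (x, y)) ⁻¹' {p : ℝ × ℝ | p.2 ≤ 0 ∧ b ≤ p.1 ∧ p.1 < d (p.2 - t)})
            = (∅ : Set ℝ) := by
          ext x; simp [hy]
        rw [hpre, Set.indicator_of_notMem (fun h => hy (mem_Iic.mp h))]
        simp
    calc volume {p : ℝ × ℝ | p.2 ≤ 0 ∧ b ≤ p.1 ∧ p.1 < d (p.2 - t)}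
        = ∫⁻ y, volume ((fun x => (x, y)) ⁻¹'
            {p : ℝ × ℝ | p.2 ≤ 0 ∧ b ≤ p.1 ∧ p.1 < d (p.2 - t)}) := by
          rw [Measure.volume_eq_prod, Measure.prod_apply_symm hSmeas]
      _ = ∫⁻ y, (Iic (0:ℝ)).indicator (fun y => ENNReal.ofReal (f y)) y := by
          exact lintegral_congr hslice
      _ = ∫⁻ y in Iic (0:ℝ), ENNReal.ofReal (f y) := by
          rw [lintegral_indicator measurableSet_Iic]
      _ = ENNReal.ofReal (∫ y in Iic (0:ℝ), f y) := by
          rw [← ofReal_integral_eq_lintegral_ofReal hint]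
          apply (ae_restrict_iff' measurableSet_Iic).2
          filter_upwards with y hy
          exact mul_nonneg hb' (Real.rpow_nonneg (hbase _ hy).le _)
      _ = ENNReal.ofReal ((1 - b) * α / (H - 1) * (1 + t / α) ^ (1 - H)) := by
          rw [hF0]
  -- intersection identity
  have hset : ∀ t : ℝ, 0 ≤ t →
      A t ∩ A 0 = {p : ℝ × ℝ | p.2 ≤ 0 ∧ b ≤ p.1 ∧ p.1 < d (p.2 - t)} := by
    intro t ht
    rw [hA, hA]
    ext p
    simp only [mem_inter_iff, mem_setOf_eq, sub_zero]
    constructor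
    · rintro ⟨⟨_, h2, h3⟩, ⟨h4, _, _⟩⟩; exact ⟨h4, h2, h3⟩
    · rintro ⟨h1, h2, h3⟩
      refine ⟨⟨le_trans h1 ht, h2, h3⟩, h1, h2, lt_of_lt_of_le h3 ?_⟩
      rw [hd, hd]
      have h5 : p.2 / α ≤ 0 := div_nonpos_of_nonpos_of_nonneg h1 hα.le
      have h5' : 0 < 1 - p.2 / α := by linarith
      have h6 : 1 - p.2 / α ≤ 1 - (p.2 - t) / α := by
        rw [sub_div]
        have : 0 ≤ t / α := div_nonneg ht hα.le
        linarith
      have h7 := Real.rpow_le_rpow_of_nonpos h5' h6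
        (neg_nonpos.mpr (by linarith : (0:ℝ) ≤ H))
      nlinarith
  constructor
  · have h1 : volume (A 0) = ENNReal.ofReal ((1 - b) * α / (H - 1) * (1 + 0 / α) ^ (1 - H)) := by
      rw [hA 0]
      exact key 0 le_rfl
    rw [h1]
    norm_num
  · intro t ht
    rw [hset t ht]
    exact key t ht
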